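/- Let d, n be positive integers, x_1, ..., x_n ∈ ℝ^d, λ > 0, and y ∈ {-1,1}^n with y_i = -1 for some i and y_j = 1 for some j. Then the DWD objective ψ(β₀, β) = (1/n) Σ_{i=1}^n V(y_i(β₀ + x_iᵀβ)) + (λ/2)‖β‖₂² is continuous, convex, and coercive on ℝ × ℝ^d (ψ(β₀, β) → ∞ as ‖(β₀, β)‖ → ∞), and hence attains its global minimum at some point (β̂₀, β̂) ∈ ℝ × ℝ^d; that is, the DWD solution exists. -/

import Mathlib

open scoped RealInnerProductSpace

/-- The DWD loss function. -/
noncomputable def V (u : ℝ) : ℝ := if u ≤ 1/2 then 1 - u else 1/(4*u)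

/-- The DWD objective as a function of the pair `(β₀, β)`:
`ψ(β₀, β) = (1/n) Σᵢ V(yᵢ(β₀ + xᵢᵀβ)) + (λ/2)‖β‖₂²`. -/
noncomputable def dwdObjective {d n : ℕ} (x : Fin n → EuclideanSpace ℝ (Fin d))
    (y : Fin n → ℝ) (lam : ℝ) (p : ℝ × EuclideanSpace ℝ (Fin d)) : ℝ :=
  (1 / n) * ∑ i, V (y i * (p.1 + ⟪x i, p.2⟫)) + (lam / 2) * ‖p.2‖^2

lemma V_eq_max (u : ℝ) : V u = max (1 - u) (1/(4 * max u (1/2))) := by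
  unfold V
  rcases le_or_gt u (1/2) with h | h
  · rw [if_pos h, max_eq_right h, max_eq_left]
    norm_num; linarith
  · rw [if_neg (not_le.2 h), max_eq_left h.le, max_eq_right]
    rw [le_div_iff₀ (by linarith)]
    nlinarith [sq_nonneg (2*u - 1)]

lemma V_continuous : Continuous V := by
  rw [show V = fun u => max (1 - u) (1/(4 * max u (1/2))) from funext V_eq_max]
  refine (continuous_const.sub continuous_id).max
    (continuous_const.div (continuous_const.mul (continuous_id.max continuous_const)) ?_)
  intro u
  have : (1:ℝ)/2 ≤ max u (1/2) := le_max_right _ _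
  positivity

lemma V_nonneg (u : ℝ) : 0 ≤ V u := by
  unfold V
  rcases le_or_gt u (1/2) with h | h
  · rw [if_pos h]; linarith
  · rw [if_neg (not_le.2 h)]; positivity

lemma one_sub_le_V (u : ℝ) : 1 - u ≤ V u := by
  rw [V_eq_max]; exact le_max_left _ _

lemma line_le_V (s : ℝ) (hs : 1/2 ≤ s) (u : ℝ) : 1/(2*s) - u/(4*s^2) ≤ V u := by
  have hs0 : 0 < s := by linarith
  unfold V
  rcases le_or_gt u (1/2) with h | h
  · rw [if_pos h, div_sub_div _ _ (by positivity) (by positivity), div_le_iff₀ (by positivity)]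
    nlinarith [mul_nonneg (by linarith : (0:ℝ) ≤ 2*s - 1) (by nlinarith : (0:ℝ) ≤ 2*s - u*(2*s+1))]
  · rw [if_neg (not_le.2 h), div_sub_div _ _ (by positivity) (by positivity),
      div_le_div_iff₀ (by positivity) (by linarith)]
    nlinarith [sq_nonneg (s - u)]

lemma V_eq_line (u : ℝ) :
    V u = 1/(2 * max u (1/2)) - u/(4 * (max u (1/2))^2) := by
  unfold V
  rcases le_or_gt u (1/2) with h | h
  · rw [if_pos h, max_eq_right h]; norm_num
  · rw [if_neg (not_le.2 h), max_eq_left h.le]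
    have : u ≠ 0 := by linarith
    field_simp
    ring

lemma V_convex : ConvexOn ℝ Set.univ V := by
  refine ⟨convex_univ, fun a _ b _ ta tb hta htb htab => ?_⟩
  have hsm : ta • a + tb • b = ta * a + tb * b := by simp [smul_eq_mul]
  set m := max (ta * a + tb * b) (1/2) with hm
  have hm2 : (1:ℝ)/2 ≤ m := le_max_right _ _
  have hkey : V (ta * a + tb * b) = ta * (1/(2*m) - a/(4*m^2)) + tb * (1/(2*m) - b/(4*m^2)) := by
    rw [V_eq_line, ← hm]
    linear_combination (-(1:ℝ)/(2*m)) * htab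
  rw [hsm, hkey, smul_eq_mul, smul_eq_mul]
  gcongr
  · exact line_le_V m hm2 a
  · exact line_le_V m hm2 b

/-- if both classes are present, the DWD objective `ψ` is
continuous, convex, and coercive on `ℝ × ℝ^d`, and attains its global minimum
at some `(β̂₀, β̂)`: the DWD solution exists. -/
theorem dwd_solution_exists (d n : ℕ) (hd : 0 < d) (hn : 0 < n)
    (x : Fin n → EuclideanSpace ℝ (Fin d)) (lam : ℝ) (hlam : 0 < lam)
    (y : Fin n → ℝ) (hy : ∀ i, y i = -1 ∨ y i = 1)
    (hneg : ∃ i, y i = -1) (hpos : ∃ j, y j = 1) :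
    Continuous (dwdObjective x y lam) ∧
      ConvexOn ℝ Set.univ (dwdObjective x y lam) ∧
      (∀ r : ℝ, ∃ R : ℝ, ∀ p : ℝ × EuclideanSpace ℝ (Fin d),
        R ≤ ‖p‖ → r ≤ dwdObjective x y lam p) ∧
      ∃ phat : ℝ × EuclideanSpace ℝ (Fin d),
        ∀ p : ℝ × EuclideanSpace ℝ (Fin d),
          dwdObjective x y lam phat ≤ dwdObjective x y lam p := by
  have hn' : (0:ℝ) < n := by exact_mod_cast hn
  -- Continuity
  have hcont : Continuous (dwdObjective x y lam) := by
    unfold dwdObjective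
    refine Continuous.add ?_ (continuous_const.mul ((continuous_snd.norm).pow 2))
    exact continuous_const.mul (continuous_finset_sum _ fun i _ =>
      V_continuous.comp (continuous_const.mul (continuous_fst.add
        (Continuous.inner continuous_const continuous_snd))))
  -- Convexity
  have hconv : ConvexOn ℝ Set.univ (dwdObjective x y lam) := by
    have hterm : ∀ i, ConvexOn ℝ Set.univ
        (fun p : ℝ × EuclideanSpace ℝ (Fin d) => V (y i * (p.1 + ⟪x i, p.2⟫))) := by
      intro i
      refine ⟨convex_univ, fun a _ b _ ta tb hta htb htab => ?_⟩
      dsimp only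
      have hL : y i * ((ta • a + tb • b).1 + ⟪x i, (ta • a + tb • b).2⟫)
          = ta • (y i * (a.1 + ⟪x i, a.2⟫)) + tb • (y i * (b.1 + ⟪x i, b.2⟫)) := by
        simp only [Prod.smul_fst, Prod.smul_snd, Prod.fst_add, Prod.snd_add,
          inner_add_right, real_inner_smul_right, smul_eq_mul]
        ring
      rw [hL]
      exact V_convex.2 (Set.mem_univ _) (Set.mem_univ _) hta htb htab
    have hsum : ConvexOn ℝ Set.univ
        (fun p : ℝ × EuclideanSpace ℝ (Fin d) =>
          (1/(n:ℝ)) * ∑ i, V (y i * (p.1 + ⟪x i, p.2⟫))) := by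
      have h1 : ConvexOn ℝ Set.univ
          (fun p : ℝ × EuclideanSpace ℝ (Fin d) =>
            ∑ i, V (y i * (p.1 + ⟪x i, p.2⟫))) := by
        classical
        have key : ∀ t : Finset (Fin n), ConvexOn ℝ Set.univ
            (fun p : ℝ × EuclideanSpace ℝ (Fin d) =>
              ∑ i ∈ t, V (y i * (p.1 + ⟪x i, p.2⟫))) := by
          intro t
          induction t using Finset.induction with
          | empty => simpa using convexOn_const (0:ℝ) convex_univ
          | insert _ _ hni ih =>
              simp only [Finset.sum_insert hni]
              exact (hterm _).add ih
        exact key Finset.univ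
      have := h1.smul (c := 1/(n:ℝ)) (by positivity)
      simpa [smul_eq_mul] using this
    have hnorm : ConvexOn ℝ Set.univ
        (fun p : ℝ × EuclideanSpace ℝ (Fin d) => (lam/2) * ‖p.2‖^2) := by
      have h2 : ConvexOn ℝ Set.univ
          (fun p : ℝ × EuclideanSpace ℝ (Fin d) => ‖p.2‖^2) := by
        refine ⟨convex_univ, fun a _ b _ ta tb hta htb htab => ?_⟩
        dsimp only
        have h3 : ‖(ta • a + tb • b).2‖ ≤ ta * ‖a.2‖ + tb * ‖b.2‖ := by
          simp only [Prod.smul_snd, Prod.snd_add]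
          refine (norm_add_le _ _).trans ?_
          rw [norm_smul, norm_smul, Real.norm_eq_abs, Real.norm_eq_abs,
            abs_of_nonneg hta, abs_of_nonneg htb]
        calc ‖(ta • a + tb • b).2‖^2 ≤ (ta * ‖a.2‖ + tb * ‖b.2‖)^2 := by
              apply sq_le_sq' <;> nlinarith [norm_nonneg (ta • a + tb • b).2, norm_nonneg a.2, norm_nonneg b.2, mul_nonneg hta (norm_nonneg a.2), mul_nonneg htb (norm_nonneg b.2)]
          _ ≤ ta • ‖a.2‖^2 + tb • ‖b.2‖^2 := by
              simp only [smul_eq_mul]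
              nlinarith [sq_nonneg (‖a.2‖ - ‖b.2‖), mul_nonneg hta htb]
      have := h2.smul (c := lam/2) (by positivity)
      simpa [smul_eq_mul] using this
    exact hsum.add hnorm
  -- Coercivity
  set M : ℝ := ∑ k, ‖x k‖ with hM
  have hM0 : 0 ≤ M := Finset.sum_nonneg fun _ _ => norm_nonneg _
  have hMk : ∀ k, ‖x k‖ ≤ M :=
    fun k => Finset.single_le_sum (f := fun k => ‖x k‖) (fun _ _ => norm_nonneg _) (Finset.mem_univ k)
  have bound1 : ∀ p : ℝ × EuclideanSpace ℝ (Fin d),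
      (lam/2) * ‖p.2‖^2 ≤ dwdObjective x y lam p := by
    intro p
    unfold dwdObjective
    have : (0:ℝ) ≤ (1/n) * ∑ i, V (y i * (p.1 + ⟪x i, p.2⟫)) := by
      apply mul_nonneg (by positivity)
      exact Finset.sum_nonneg fun i _ => V_nonneg _
    linarith
  have bound2 : ∀ p : ℝ × EuclideanSpace ℝ (Fin d),
      (1/(n:ℝ)) * (|p.1| - M * ‖p.2‖) ≤ dwdObjective x y lam p := by
    intro p
    obtain ⟨i₀, hi₀⟩ := hneg
    obtain ⟨j₀, hj₀⟩ := hpos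
    have hne : i₀ ≠ j₀ := by intro h; rw [h, hj₀] at hi₀; norm_num at hi₀
    have hinner : ∀ k, |⟪x k, p.2⟫| ≤ M * ‖p.2‖ := fun k =>
      (abs_real_inner_le_norm _ _).trans (by
        apply mul_le_mul_of_nonneg_right (hMk k) (norm_nonneg _))
    have hpair : |p.1| - M * ‖p.2‖ ≤
        V (y i₀ * (p.1 + ⟪x i₀, p.2⟫)) + V (y j₀ * (p.1 + ⟪x j₀, p.2⟫)) := by
      rw [hi₀, hj₀]
      have h1 := one_sub_le_V (-1 * (p.1 + ⟪x i₀, p.2⟫))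
      have h2 := one_sub_le_V (1 * (p.1 + ⟪x j₀, p.2⟫))
      have h3 := V_nonneg (-1 * (p.1 + ⟪x i₀, p.2⟫))
      have h4 := V_nonneg (1 * (p.1 + ⟪x j₀, p.2⟫))
      have ha := abs_le.1 (hinner i₀)
      have hb := abs_le.1 (hinner j₀)
      rcases le_or_gt 0 p.1 with h | h
      · rw [abs_of_nonneg h]; nlinarith
      · rw [abs_of_neg h]; nlinarith
    have hsum : V (y i₀ * (p.1 + ⟪x i₀, p.2⟫)) + V (y j₀ * (p.1 + ⟪x j₀, p.2⟫))
        ≤ ∑ i, V (y i * (p.1 + ⟪x i, p.2⟫)) := by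
      calc V (y i₀ * (p.1 + ⟪x i₀, p.2⟫)) + V (y j₀ * (p.1 + ⟪x j₀, p.2⟫))
          = ∑ i ∈ ({i₀, j₀} : Finset (Fin n)), V (y i * (p.1 + ⟪x i, p.2⟫)) :=
            (Finset.sum_pair (f := fun i => V (y i * (p.1 + ⟪x i, p.2⟫))) hne).symm
        _ ≤ ∑ i, V (y i * (p.1 + ⟪x i, p.2⟫)) :=
            Finset.sum_le_sum_of_subset_of_nonneg (Finset.subset_univ _)
              (fun i _ _ => V_nonneg _)
    have hmain : (1/(n:ℝ)) * (|p.1| - M * ‖p.2‖)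
        ≤ (1/(n:ℝ)) * ∑ i, V (y i * (p.1 + ⟪x i, p.2⟫)) := by
      apply mul_le_mul_of_nonneg_left _ (by positivity)
      linarith
    unfold dwdObjective
    nlinarith [sq_nonneg ‖p.2‖, mul_nonneg hlam.le (sq_nonneg ‖p.2‖)]
  have hcoer : ∀ r : ℝ, ∃ R : ℝ, ∀ p : ℝ × EuclideanSpace ℝ (Fin d),
      R ≤ ‖p‖ → r ≤ dwdObjective x y lam p := by
    intro r
    set r' := max r 0 with hr'
    set B := Real.sqrt (2 * r' / lam) with hB
    have hB0 : 0 ≤ B := Real.sqrt_nonneg _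
    have hBsq : B^2 = 2 * r' / lam := Real.sq_sqrt (by positivity)
    set A := n * r' + M * B with hA
    refine ⟨max A B, fun p hp => ?_⟩
    rw [Prod.norm_def, Real.norm_eq_abs] at hp
    rcases le_or_gt B ‖p.2‖ with h | h
    · have := bound1 p
      have : (lam/2) * B^2 ≤ (lam/2) * ‖p.2‖^2 := by
        apply mul_le_mul_of_nonneg_left _ (by positivity)
        nlinarith
      have hr : (lam/2) * B^2 = r' := by rw [hBsq]; field_simp [hlam.ne']; try ring
      have := bound1 p
      calc r ≤ r' := le_max_left _ _
        _ = (lam/2) * B^2 := hr.symm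
        _ ≤ (lam/2) * ‖p.2‖^2 := by nlinarith
        _ ≤ dwdObjective x y lam p := bound1 p
    · have hA1 : A ≤ |p.1| := by
        rcases max_cases |p.1| ‖p.2‖ with ⟨he, _⟩ | ⟨he, hlt⟩
        · rw [he] at hp; exact (le_max_left A B).trans hp
        · rw [he] at hp; exact absurd ((le_max_right A B).trans hp) (not_le.2 h)
      have : (1/(n:ℝ)) * (|p.1| - M * ‖p.2‖) ≥ (1/(n:ℝ)) * (A - M * B) := by
        apply mul_le_mul_of_nonneg_left _ (by positivity)
        have : M * ‖p.2‖ ≤ M * B := mul_le_mul_of_nonneg_left h.le hM0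
        linarith
      have hAr : (1/(n:ℝ)) * (A - M * B) = r' := by
        have hAB : A - M * B = n * r' := by rw [hA]; ring
        rw [hAB]; field_simp; try ring
      calc r ≤ r' := le_max_left _ _
        _ = (1/(n:ℝ)) * (A - M * B) := hAr.symm
        _ ≤ (1/(n:ℝ)) * (|p.1| - M * ‖p.2‖) := this
        _ ≤ dwdObjective x y lam p := bound2 p
  refine ⟨hcont, hconv, hcoer, ?_⟩
  have htend : Filter.Tendsto (dwdObjective x y lam)
      (Filter.cocompact _) Filter.atTop := by
    rw [Filter.tendsto_atTop]
    intro r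
    obtain ⟨R, hR⟩ := hcoer r
    exact (tendsto_norm_cocompact_atTop.eventually_ge_atTop R).mono fun p hp => hR p hp
  exact hcont.exists_forall_le htend
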